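/- Let r ≥ 1 and let A₁, …, A_r be real n×n matrices. There exist real orthogonal n×n matrices Q₁, …, Q_r such that, with indices taken cyclically (Q_{r+1} := Q₁), the matrix Q₂ᵀ A₁ Q₁ is quasi-upper-triangular and Q_{i+1}ᵀ A_i Q_i is upper triangular for every i = 2, …, r. -/

import Mathlib

open Matrix

def QuasiUpperTriangular {n : ℕ} (T : Matrix (Fin n) (Fin n) ℝ) : Prop :=
  (∀ i j : Fin n, (j : ℕ) + 1 < (i : ℕ) → T i j = 0) ∧
  ¬ ∃ (i : ℕ) (h1 : i + 1 < n) (h2 : i + 2 < n),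
      T ⟨i + 1, h1⟩ ⟨i, Nat.lt_of_succ_lt h1⟩ ≠ 0 ∧ T ⟨i + 2, h2⟩ ⟨i + 1, h1⟩ ≠ 0

open Module Finset Filter Topology Polynomial

lemma exists_invariant_subspace (n : ℕ) (hn : 0 < n) (A : Matrix (Fin n) (Fin n) ℝ) :
    ∃ W : Submodule ℝ (EuclideanSpace ℝ (Fin n)),
      1 ≤ Module.finrank ℝ W ∧ Module.finrank ℝ W ≤ 2 ∧ ∀ x ∈ W, WithLp.toLp 2 (A.mulVec x) ∈ W := by
  haveI : Nonempty (Fin n) := ⟨⟨0, hn⟩⟩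
  set B : Matrix (Fin n) (Fin n) ℂ := A.map (Complex.ofReal ·) with hB
  obtain ⟨μ, hμ⟩ := Module.End.exists_eigenvalue (Matrix.mulVecLin B)
  obtain ⟨v, hv⟩ := hμ.exists_hasEigenvector
  have hv0 : v ≠ 0 := hv.right
  have hveq : B.mulVec v = μ • v := hv.apply_eq_smul
  set X : EuclideanSpace ℝ (Fin n) := WithLp.toLp 2 (fun k => (v k).re) with hX
  set Y : EuclideanSpace ℝ (Fin n) := WithLp.toLp 2 (fun k => (v k).im) with hY
  have hAX : WithLp.toLp 2 (A.mulVec X) = μ.re • X - μ.im • Y := by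
    ext k
    have hre := congrArg Complex.re (congrFun hveq k)
    simpa [Matrix.mulVec, dotProduct, hB, Complex.re_sum, Complex.mul_re,
      Pi.smul_apply, Complex.smul_re, X, Y, Complex.ofReal_re, Complex.ofReal_im,
      Finset.sum_sub_distrib, mul_comm] using hre
  have hAY : WithLp.toLp 2 (A.mulVec Y) = μ.im • X + μ.re • Y := by
    ext k
    have him := congrArg Complex.im (congrFun hveq k)
    simpa [Matrix.mulVec, dotProduct, hB, Complex.im_sum, Complex.mul_im,
      Pi.smul_apply, Complex.smul_im, X, Y, Complex.ofReal_re, Complex.ofReal_im,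
      Finset.sum_add_distrib, mul_comm, add_comm] using him
  refine ⟨Submodule.span ℝ {X, Y}, ?_, ?_, ?_⟩
  · -- nontrivial
    rw [Nat.one_le_iff_ne_zero]
    intro h0
    have hbot : Submodule.span ℝ {X, Y} = ⊥ := by
      haveI : FiniteDimensional ℝ (EuclideanSpace ℝ (Fin n)) := inferInstance
      exact Submodule.finrank_eq_zero.mp h0
    have hXm : X ∈ Submodule.span ℝ {X, Y} := Submodule.subset_span (by simp)
    have hYm : Y ∈ Submodule.span ℝ {X, Y} := Submodule.subset_span (by simp)
    rw [hbot] at hXm hYm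
    simp only [Submodule.mem_bot] at hXm hYm
    apply hv0
    funext k
    have h1 : (v k).re = 0 := congrFun (congrArg WithLp.ofLp hXm) k
    have h2 : (v k).im = 0 := congrFun (congrArg WithLp.ofLp hYm) k
    simp [Complex.ext_iff, h1, h2]
  · -- rank ≤ 2
    classical
    calc Module.finrank ℝ (Submodule.span ℝ ({X, Y} : Set (EuclideanSpace ℝ (Fin n))))
        ≤ ({X, Y} : Set (EuclideanSpace ℝ (Fin n))).toFinset.card := finrank_span_le_card _
      _ ≤ 2 := by
          rw [Set.toFinset_insert, Set.toFinset_singleton]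
          exact (Finset.card_insert_le _ _).trans (by simp)
  · -- invariance
    intro x hx
    rw [Submodule.mem_span_pair] at hx ⊢
    obtain ⟨a, b, rfl⟩ := hx
    have : WithLp.toLp 2 (A.mulVec (a • X + b • Y)) = (a * μ.re + b * μ.im) • X + (b * μ.re - a * μ.im) • Y := by
      rw [Matrix.mulVec_add, Matrix.mulVec_smul,
        Matrix.mulVec_smul, WithLp.toLp_add, WithLp.toLp_smul, WithLp.toLp_smul, hAX, hAY]
      module
    exact ⟨_, _, this.symm⟩

local notation "⟪" x ", " y "⟫" => @inner ℝ _ _ x y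

lemma exists_orth_block (n d : ℕ) (A : Matrix (Fin n) (Fin n) ℝ)
    (W : Submodule ℝ (EuclideanSpace ℝ (Fin n))) (hd : Module.finrank ℝ W = d)
    (hinv : ∀ x ∈ W, WithLp.toLp 2 (A.mulVec x) ∈ W) :
    ∃ Q : Matrix (Fin n) (Fin n) ℝ, Qᵀ * Q = 1 ∧
      ∀ i j : Fin n, (j : ℕ) < d → d ≤ (i : ℕ) → (Qᵀ * A * Q) i j = 0 := by
  classical
  have hdn : d ≤ n := by
    rw [← hd]
    simpa [finrank_euclideanSpace_fin] using W.finrank_le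
  -- orthonormal basis of W
  let w : OrthonormalBasis (Fin d) ℝ W := (stdOrthonormalBasis ℝ W).reindex (finCongr hd)
  let v : Fin n → EuclideanSpace ℝ (Fin n) := fun i =>
    if h : (i : ℕ) < d then (w ⟨i, h⟩ : EuclideanSpace ℝ (Fin n)) else 0
  have hvon : Orthonormal ℝ (({i : Fin n | (i : ℕ) < d}).restrict v) := by
    constructor
    · rintro ⟨i, hi⟩
      have hi' : (i : ℕ) < d := hi
      show ‖(if h : (i : ℕ) < d then (w ⟨i, h⟩ : EuclideanSpace ℝ (Fin n)) else 0)‖ = 1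
      rw [dif_pos hi', Submodule.norm_coe]
      exact w.orthonormal.1 _
    · rintro ⟨i, hi⟩ ⟨j, hj⟩ hij
      have hi' : (i : ℕ) < d := hi
      have hj' : (j : ℕ) < d := hj
      show ⟪(if h : (i : ℕ) < d then (w ⟨i, h⟩ : EuclideanSpace ℝ (Fin n)) else 0),
        (if h : (j : ℕ) < d then (w ⟨j, h⟩ : EuclideanSpace ℝ (Fin n)) else 0)⟫ = 0
      rw [dif_pos hi', dif_pos hj', ← Submodule.coe_inner]
      apply w.orthonormal.2
      simp only [ne_eq, Subtype.mk.injEq] at hij ⊢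
      intro h
      exact hij (by
        have := congrArg (fun x : Fin d => (x : ℕ)) h
        exact Fin.ext this)
  obtain ⟨b, hb⟩ := hvon.exists_orthonormalBasis_extension_of_card_eq
    (by simp [finrank_euclideanSpace_fin])
  -- b i ∈ W for i < d
  have hbW : ∀ i : Fin n, (i : ℕ) < d → (b i : EuclideanSpace ℝ (Fin n)) ∈ W := by
    intro i hi
    rw [hb i hi]
    simp only [v, dif_pos hi]
    exact (w ⟨i, hi⟩).2
  -- span of first d basis vectors is W
  have hspan : Submodule.span ℝ (Set.range (fun j : Fin d => b (Fin.castLE hdn j))) = W := by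
    apply Submodule.eq_of_le_of_finrank_le
    · rw [Submodule.span_le]
      rintro x ⟨j, rfl⟩
      exact hbW _ (by simpa using j.2)
    · rw [hd, finrank_span_eq_card]
      · simp
      · exact b.orthonormal.linearIndependent.comp _ (Fin.castLE_injective hdn)
  -- orthogonality of later basis vectors to W
  have hperp : ∀ i : Fin n, d ≤ (i : ℕ) → ∀ x ∈ W, ⟪b i, x⟫ = 0 := by
    intro i hi x hx
    rw [← hspan] at hx
    induction hx using Submodule.span_induction with
    | mem x hx =>
        obtain ⟨j, rfl⟩ := hx
        apply b.orthonormal.2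
        intro h
        have h2 : (i : ℕ) = (j : ℕ) := by rw [h]; simp
        have := j.2
        omega
    | zero => exact inner_zero_right _
    | add x y _ _ hx hy => rw [inner_add_right, hx, hy, add_zero]
    | smul a x _ hx => rw [inner_smul_right, hx, mul_zero]
  -- the matrix
  set Q : Matrix (Fin n) (Fin n) ℝ := Matrix.of (fun k i => b i k) with hQ
  have hentry : ∀ i j : Fin n, (Qᵀ * A * Q) i j
      = ⟪b i, WithLp.toLp 2 (A.mulVec (b j))⟫ := by
    intro i j
    simp only [Matrix.mul_apply, Matrix.transpose_apply, hQ, Matrix.of_apply,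
      PiLp.inner_apply, RCLike.inner_apply, starRingEnd_apply, star_trivial,
      PiLp.toLp_apply, Matrix.mulVec, dotProduct, Finset.sum_mul, Finset.mul_sum]
    rw [Finset.sum_comm]
    apply Finset.sum_congr rfl; intro k _
    apply Finset.sum_congr rfl; intro l _
    ring
  refine ⟨Q, ?_, ?_⟩
  · ext i j
    have : (Qᵀ * Q) i j = ⟪b i, b j⟫ := by
      simp only [Matrix.mul_apply, Matrix.transpose_apply, hQ, Matrix.of_apply,
        PiLp.inner_apply, RCLike.inner_apply, starRingEnd_apply, star_trivial]
      exact Finset.sum_congr rfl fun _ _ => mul_comm _ _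
    rw [this, orthonormal_iff_ite.mp b.orthonormal i j, Matrix.one_apply]
  · intro i j hj hi
    rw [hentry]
    exact hperp i hi _ (hinv _ (hbW j hj))

lemma real_schur (n : ℕ) (A : Matrix (Fin n) (Fin n) ℝ) :
    ∃ Q : Matrix (Fin n) (Fin n) ℝ, Qᵀ * Q = 1 ∧ QuasiUpperTriangular (Qᵀ * A * Q) := by
  induction n using Nat.strong_induction_on with
  | _ n IH =>
  rcases Nat.eq_zero_or_pos n with hn | hn
  · subst hn
    refine ⟨1, by simp, ?_, ?_⟩
    · intro i; exact absurd i.2 (by omega)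
    · rintro ⟨i, h1, -⟩; omega
  obtain ⟨W, hW1, hW2, hWinv⟩ := exists_invariant_subspace n hn A
  set d := Module.finrank ℝ W with hd
  obtain ⟨Q₀, hQ₀, hQ₀blk⟩ := exists_orth_block n d A W rfl hWinv
  have hdn : d ≤ n := by
    rw [hd]; simpa [finrank_euclideanSpace_fin] using W.finrank_le
  set m := n - d with hm'
  have hm : d + m = n := by omega
  set M : Matrix (Fin n) (Fin n) ℝ := Q₀ᵀ * A * Q₀ with hM
  set e : (Fin d ⊕ Fin m) ≃ Fin n := finSumFinEquiv.trans (finCongr hm) with he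
  set M' : Matrix (Fin d ⊕ Fin m) (Fin d ⊕ Fin m) ℝ := M.submatrix e e with hM'
  -- block structure facts about e
  have hee : ∀ (i : Fin d), ((e (Sum.inl i) : Fin n) : ℕ) = (i : ℕ) := by
    intro i; simp [he]
  have hee2 : ∀ (j : Fin m), ((e (Sum.inr j) : Fin n) : ℕ) = d + (j : ℕ) := by
    intro j; simp [he]
  have hsymm1 : ∀ (p : Fin n) (h : (p : ℕ) < d), e.symm p = Sum.inl ⟨(p : ℕ), h⟩ := by
    intro p h
    rw [Equiv.symm_apply_eq]
    exact Fin.ext (hee ⟨(p : ℕ), h⟩)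
  have hsymm2 : ∀ (p : Fin n) (h : d ≤ (p : ℕ)), e.symm p = Sum.inr ⟨(p : ℕ) - d, by omega⟩ := by
    intro p h
    rw [Equiv.symm_apply_eq]
    refine Fin.ext ?_
    rw [hee2]
    show (p : ℕ) = d + ((p : ℕ) - d)
    omega
  have hblk21 : M'.toBlocks₂₁ = 0 := by
    ext p q
    simp only [Matrix.toBlocks₂₁, Matrix.of_apply, hM', Matrix.submatrix_apply, Matrix.zero_apply]
    exact hQ₀blk _ _ (by rw [hee]; exact q.2) (by rw [hee2]; omega)
  set D : Matrix (Fin m) (Fin m) ℝ := M'.toBlocks₂₂ with hD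
  obtain ⟨Q₁, hQ₁, hquasi⟩ := IH m (by omega) D
  set Q₂ : Matrix (Fin n) (Fin n) ℝ :=
    (Matrix.fromBlocks 1 0 0 Q₁).submatrix e.symm e.symm with hQ₂
  have hQ₂orth : Q₂ᵀ * Q₂ = 1 := by
    rw [hQ₂, Matrix.transpose_submatrix, Matrix.submatrix_mul_equiv,
      Matrix.fromBlocks_transpose, Matrix.fromBlocks_multiply]
    simp [hQ₁, Matrix.fromBlocks_one]
  refine ⟨Q₀ * Q₂, ?_, ?_⟩
  · rw [Matrix.transpose_mul, Matrix.mul_assoc, ← Matrix.mul_assoc Q₀ᵀ, hQ₀, Matrix.one_mul,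
      hQ₂orth]
  have hT : (Q₀ * Q₂)ᵀ * A * (Q₀ * Q₂)
      = (Matrix.fromBlocks M'.toBlocks₁₁ (M'.toBlocks₁₂ * Q₁) 0
          (Q₁ᵀ * D * Q₁)).submatrix e.symm e.symm := by
    have hMM : M = M'.submatrix e.symm e.symm := by
      rw [hM', Matrix.submatrix_submatrix]
      simp [Equiv.self_comp_symm]
    have : (Q₀ * Q₂)ᵀ * A * (Q₀ * Q₂) = Q₂ᵀ * M * Q₂ := by
      rw [hM, Matrix.transpose_mul]
      simp only [Matrix.mul_assoc]
    rw [this, hMM, hQ₂, Matrix.transpose_submatrix, Matrix.submatrix_mul_equiv,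
      Matrix.submatrix_mul_equiv, Matrix.fromBlocks_transpose]
    congr 1
    rw [← Matrix.fromBlocks_toBlocks M', hblk21, hD, Matrix.fromBlocks_multiply,
      Matrix.fromBlocks_multiply]
    congr 1 <;> simp [Matrix.mul_assoc]
  rw [hT]
  have hd2 : d ≤ 2 := hW2
  have hd1 : 1 ≤ d := hW1
  constructor
  · intro p q hpq
    rcases lt_or_ge (q : ℕ) d with hq | hq
    · rcases lt_or_ge (p : ℕ) d with hp | hp
      · omega
      · rw [Matrix.submatrix_apply, hsymm1 q hq, hsymm2 p hp, Matrix.fromBlocks_apply₂₁]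
        simp
    · have hp : d ≤ (p : ℕ) := by omega
      rw [Matrix.submatrix_apply, hsymm2 q hq, hsymm2 p hp, Matrix.fromBlocks_apply₂₂]
      exact hquasi.1 _ _ (by simp; omega)
  · rintro ⟨i, h1, h2, hne1, hne2⟩
    rcases lt_or_ge (i + 2) d with hcase | hcase
    · omega
    rcases lt_or_ge (i + 1) d with hcase2 | hcase2
    · -- i+2 ≥ d, i+1 < d : second entry is in lower-left block, zero
      apply hne2
      rw [Matrix.submatrix_apply, hsymm1 ⟨i+1, h1⟩ hcase2,
        hsymm2 ⟨i+2, h2⟩ (show d ≤ i + 2 by omega), Matrix.fromBlocks_apply₂₁]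
      rfl
    rcases lt_or_ge i d with hcase3 | hcase3
    · -- i+1 ≥ d, i < d : first entry is in lower-left block, zero
      apply hne1
      rw [Matrix.submatrix_apply, hsymm1 ⟨i, _⟩ hcase3,
        hsymm2 ⟨i+1, h1⟩ (show d ≤ i + 1 by omega), Matrix.fromBlocks_apply₂₁]
      rfl
    · -- i ≥ d : both entries in bottom-right block
      apply hquasi.2
      refine ⟨i - d, by omega, by omega, ?_, ?_⟩
      · have := hne1
        rw [Matrix.submatrix_apply, hsymm2 ⟨i+1, h1⟩ (show d ≤ i + 1 by omega),
          hsymm2 ⟨i, _⟩ (show d ≤ i by omega), Matrix.fromBlocks_apply₂₂] at this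
        convert this using 3
        show i - d + 1 = i + 1 - d
        omega
      · have := hne2
        rw [Matrix.submatrix_apply, hsymm2 ⟨i+2, h2⟩ (show d ≤ i + 2 by omega),
          hsymm2 ⟨i+1, h1⟩ (show d ≤ i + 1 by omega), Matrix.fromBlocks_apply₂₂] at this
        convert this using 3
        · show i - d + 2 = i + 2 - d
          omega
        · show i - d + 1 = i + 1 - d
          omega

lemma qr_decomp (n : ℕ) (M : Matrix (Fin n) (Fin n) ℝ) :
    ∃ Q R : Matrix (Fin n) (Fin n) ℝ, Qᵀ * Q = 1 ∧
      (∀ p q : Fin n, q < p → R p q = 0) ∧ M = Q * R := by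
  classical
  have hcard : Module.finrank ℝ (EuclideanSpace ℝ (Fin n)) = Fintype.card (Fin n) := by
    simp [finrank_euclideanSpace_fin]
  set f : Fin n → EuclideanSpace ℝ (Fin n) := fun j => WithLp.toLp 2 (fun k => M k j) with hf
  haveI : WellFoundedLT (Fin n) := inferInstance
  set b : OrthonormalBasis (Fin n) ℝ (EuclideanSpace ℝ (Fin n)) :=
    InnerProductSpace.gramSchmidtOrthonormalBasis (𝕜 := ℝ) (ι := Fin n) hcard f with hb
  set Q : Matrix (Fin n) (Fin n) ℝ := Matrix.of (fun k i => b i k) with hQ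
  have hQorth : Qᵀ * Q = 1 := by
    ext i j
    have : (Qᵀ * Q) i j = @inner ℝ _ _ (b i) (b j) := by
      simp only [Matrix.mul_apply, Matrix.transpose_apply, hQ, Matrix.of_apply,
        PiLp.inner_apply, RCLike.inner_apply, starRingEnd_apply, star_trivial]
      exact Finset.sum_congr rfl fun _ _ => mul_comm _ _
    rw [this, orthonormal_iff_ite.mp b.orthonormal i j, Matrix.one_apply]
  refine ⟨Q, Qᵀ * M, hQorth, ?_, ?_⟩
  · intro p q hpq
    have : (Qᵀ * M) p q = @inner ℝ _ _ (b p) (f q) := by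
      simp only [Matrix.mul_apply, Matrix.transpose_apply, hQ, Matrix.of_apply,
        PiLp.inner_apply, RCLike.inner_apply, starRingEnd_apply, star_trivial]
      exact Finset.sum_congr rfl fun _ _ => mul_comm _ _
    rw [this]
    exact InnerProductSpace.gramSchmidtOrthonormalBasis_inv_triangular (𝕜 := ℝ) (ι := Fin n) hcard f hpq
  · rw [← Matrix.mul_assoc, mul_eq_one_comm.mp hQorth, Matrix.one_mul]

lemma rq_decomp (n : ℕ) (M : Matrix (Fin n) (Fin n) ℝ) :
    ∃ Q R : Matrix (Fin n) (Fin n) ℝ, Qᵀ * Q = 1 ∧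
      (∀ p q : Fin n, q < p → R p q = 0) ∧ M = R * Qᵀ := by
  obtain ⟨Q₁, R₁, hQ₁, hR₁, hM₁⟩ := qr_decomp n ((Mᵀ).submatrix Fin.rev Fin.rev)
  have hrev : ∀ X : Matrix (Fin n) (Fin n) ℝ,
      X.submatrix Fin.rev Fin.rev = X.submatrix ⇑(Fin.revPerm (n := n)) ⇑(Fin.revPerm (n := n)) :=
    fun X => rfl
  refine ⟨Q₁.submatrix Fin.rev Fin.rev, (R₁ᵀ).submatrix Fin.rev Fin.rev, ?_, ?_, ?_⟩
  · rw [Matrix.transpose_submatrix, hrev Q₁ᵀ, hrev Q₁, Matrix.submatrix_mul_equiv,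
      hQ₁, Matrix.submatrix_one_equiv]
  · intro p q hpq
    simp only [Matrix.submatrix_apply, Matrix.transpose_apply]
    exact hR₁ _ _ (by rwa [Fin.rev_lt_rev])
  · have hrr : (Fin.rev ∘ Fin.rev : Fin n → Fin n) = id := by
      funext x; simp
    have hMT : Mᵀ = (Q₁ * R₁).submatrix Fin.rev Fin.rev := by
      have := congrArg (fun X : Matrix (Fin n) (Fin n) ℝ =>
        X.submatrix (Fin.rev : Fin n → Fin n) Fin.rev) hM₁
      simp only [Matrix.submatrix_submatrix, hrr, Matrix.submatrix_id_id] at this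
      rw [← this]
    calc M = Mᵀᵀ := (Matrix.transpose_transpose M).symm
      _ = ((Q₁ * R₁).submatrix Fin.rev Fin.rev)ᵀ := by rw [← hMT]
      _ = ((Q₁ * R₁)ᵀ).submatrix Fin.rev Fin.rev := by rw [Matrix.transpose_submatrix]
      _ = (R₁ᵀ * Q₁ᵀ).submatrix Fin.rev Fin.rev := by rw [Matrix.transpose_mul]
      _ = R₁ᵀ.submatrix Fin.rev Fin.rev * Q₁ᵀ.submatrix Fin.rev Fin.rev := by
          rw [hrev R₁ᵀ, hrev Q₁ᵀ, hrev (R₁ᵀ * Q₁ᵀ), Matrix.submatrix_mul_equiv]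
      _ = R₁ᵀ.submatrix Fin.rev Fin.rev * (Q₁.submatrix Fin.rev Fin.rev)ᵀ := by
          rw [Matrix.transpose_submatrix]

lemma quasi_of_ut_mul {n : ℕ} (U S B : Matrix (Fin n) (Fin n) ℝ)
    (hU : ∀ p q : Fin n, q < p → U p q = 0) (hdet : IsUnit U.det)
    (hS : QuasiUpperTriangular S) (hSB : S = U * B) : QuasiUpperTriangular B := by
  have hB : B = U⁻¹ * S := by
    rw [hSB, ← Matrix.mul_assoc, Matrix.nonsing_inv_mul _ hdet, Matrix.one_mul]
  haveI := U.invertibleOfIsUnitDet hdet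
  have hUbt : U.BlockTriangular id := fun i j h => hU i j h
  have hUinv : U⁻¹.BlockTriangular id := blockTriangular_inv_of_blockTriangular hUbt
  have hUinvd : ∀ i : Fin n, U⁻¹ i i ≠ 0 := by
    have hdet' : U⁻¹.det ≠ 0 := by
      have h1 : U⁻¹.det * U.det = 1 := by
        rw [← Matrix.det_mul, Matrix.nonsing_inv_mul _ hdet, Matrix.det_one]
      intro h0; rw [h0, zero_mul] at h1; exact zero_ne_one h1
    rw [Matrix.det_of_upperTriangular hUinv] at hdet'
    intro i
    exact fun h0 => hdet' (Finset.prod_eq_zero (Finset.mem_univ i) h0)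
  have hsub : ∀ (i : ℕ) (h1 : i + 1 < n) (hin : i < n),
      B ⟨i + 1, h1⟩ ⟨i, hin⟩ = U⁻¹ ⟨i + 1, h1⟩ ⟨i + 1, h1⟩ * S ⟨i + 1, h1⟩ ⟨i, hin⟩ := by
    intro i h1 hin
    rw [hB, Matrix.mul_apply]
    apply Finset.sum_eq_single
    · intro k _ hk
      rcases lt_or_ge (k : ℕ) (i + 1) with hlt | hge
      · rw [hUinv (show (id k : ℕ) < id (⟨i+1, h1⟩ : Fin n) from hlt), zero_mul]
      · have hgt : i + 1 < (k : ℕ) := by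
          rcases hge.lt_or_eq with h | h
          · exact h
          · exact absurd (Fin.ext h.symm : k = ⟨i+1, h1⟩) hk
        rw [hS.1 k ⟨i, hin⟩ (by simpa using hgt), mul_zero]
    · intro h; exact absurd (Finset.mem_univ _) h
  constructor
  · intro p q hpq
    rw [hB, Matrix.mul_apply]
    apply Finset.sum_eq_zero
    intro k _
    rcases lt_or_ge (k : ℕ) (p : ℕ) with hlt | hge
    · rw [hUinv (show (id k : ℕ) < (id p : ℕ) from hlt), zero_mul]
    · rw [hS.1 k q (by omega), mul_zero]
  · rintro ⟨i, h1, h2, hb1, hb2⟩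
    apply hS.2
    refine ⟨i, h1, h2, ?_, ?_⟩
    · intro h0
      rw [hsub i h1 _, h0, mul_zero] at hb1
      exact hb1 rfl
    · intro h0
      rw [show (⟨i+1, h1⟩ : Fin n) = ⟨(i+1), Nat.lt_of_succ_lt h2⟩ from rfl,
        hsub (i+1) h2 (Nat.lt_of_succ_lt h2), h0, mul_zero] at hb2
      exact hb2 rfl

lemma orth_isUnit_det {n : ℕ} (Q : Matrix (Fin n) (Fin n) ℝ) (h : Qᵀ * Q = 1) :
    IsUnit Q.det ∧ IsUnit Qᵀ.det := by
  have h1 : Qᵀ.det * Q.det = 1 := by rw [← Matrix.det_mul, h, Matrix.det_one]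
  exact ⟨IsUnit.of_mul_eq_one _ (by rwa [mul_comm] at h1), IsUnit.of_mul_eq_one _ h1⟩

lemma ut_mul_ut {n : ℕ} (U V : Matrix (Fin n) (Fin n) ℝ)
    (hU : ∀ p q : Fin n, q < p → U p q = 0) (hV : ∀ p q : Fin n, q < p → V p q = 0) :
    ∀ p q : Fin n, q < p → (U * V) p q = 0 := by
  have hUbt : U.BlockTriangular id := fun i j h => hU i j h
  have hVbt : V.BlockTriangular id := fun i j h => hV i j h
  exact fun p q h => (hUbt.mul hVbt) h

lemma periodic_schur_invertible (n r : ℕ) (hr : 1 ≤ r) (A : Fin r → Matrix (Fin n) (Fin n) ℝ)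
    (hA : ∀ i : Fin r, (i : ℕ) ≠ 0 → IsUnit (A i).det) :
    ∃ Q : Fin r → Matrix (Fin n) (Fin n) ℝ,
      (∀ i, (Q i)ᵀ * Q i = 1) ∧
      QuasiUpperTriangular
        ((Q ⟨1 % r, Nat.mod_lt _ hr⟩)ᵀ * A ⟨0, hr⟩ * Q ⟨0, hr⟩) ∧
      ∀ i : Fin r, i ≠ ⟨0, hr⟩ → ∀ p q : Fin n, q < p →
        ((Q ⟨((i : ℕ) + 1) % r, Nat.mod_lt _ hr⟩)ᵀ * A i * Q i) p q = 0 := by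
  classical
  set Af : ℕ → Matrix (Fin n) (Fin n) ℝ := fun k => A ⟨k % r, Nat.mod_lt _ hr⟩ with hAf
  have hAfA : ∀ i : Fin r, Af (i : ℕ) = A i := by
    intro i
    have h : (⟨(i : ℕ) % r, Nat.mod_lt _ hr⟩ : Fin r) = i := Fin.ext (Nat.mod_eq_of_lt i.2)
    simp only [hAf, h]
  rcases eq_or_lt_of_le hr with hr1 | hr2
  · -- r = 1
    obtain ⟨Q₀, hQ₀, hquasi⟩ := real_schur n (A ⟨0, hr⟩)
    refine ⟨fun _ => Q₀, fun _ => hQ₀, ?_, ?_⟩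
    · exact hquasi
    · intro i hi
      exact absurd (Fin.ext (by omega : (i : ℕ) = 0)) hi
  -- now r ≥ 2
  set g : ℕ → Matrix (Fin n) (Fin n) ℝ :=
    fun t => Nat.rec (1 : Matrix (Fin n) (Fin n) ℝ) (fun s prev => prev * Af (r - 1 - s)) t
    with hg
  obtain ⟨Q₀, hQ₀orth, hS⟩ := real_schur n (g (r - 1) * Af 0)
  -- the chain
  have chain : ∀ t, t ≤ r - 1 →
      ∃ (Qc : ℕ → Matrix (Fin n) (Fin n) ℝ) (Rc : ℕ → Matrix (Fin n) (Fin n) ℝ)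
        (U : Matrix (Fin n) (Fin n) ℝ),
        Qc 0 = Q₀ ∧ (∀ s ≤ t, (Qc s)ᵀ * Qc s = 1) ∧
        (∀ s < t, (Qc s)ᵀ * Af (r - 1 - s) = Rc s * (Qc (s+1))ᵀ ∧
          (∀ p q : Fin n, q < p → Rc s p q = 0) ∧ IsUnit (Rc s).det) ∧
        (∀ p q : Fin n, q < p → U p q = 0) ∧ IsUnit U.det ∧
        Q₀ᵀ * g t = U * (Qc t)ᵀ := by
    intro t
    induction t with
    | zero =>
      intro _
      refine ⟨fun _ => Q₀, fun _ => 1, 1, rfl, fun _ _ => hQ₀orth, fun s hs => absurd hs (by omega),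
        fun p q h => Matrix.one_apply_ne' (ne_of_lt h), by simp, ?_⟩
      show Q₀ᵀ * 1 = 1 * Q₀ᵀ
      rw [Matrix.mul_one, Matrix.one_mul]
    | succ t ih =>
      intro ht
      obtain ⟨Qc, Rc, U, hQc0, hQcorth, hchain, hUut, hUdet, hprod⟩ := ih (by omega)
      have hAunit : IsUnit (Af (r - 1 - t)).det := by
        apply hA
        show (r - 1 - t) % r ≠ 0
        rw [Nat.mod_eq_of_lt (by omega)]
        omega
      obtain ⟨q', R, hq'orth, hRut, hMR⟩ := rq_decomp n ((Qc t)ᵀ * Af (r - 1 - t))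
      have hRdet : IsUnit R.det := by
        have hMdet : IsUnit ((Qc t)ᵀ * Af (r - 1 - t)).det := by
          rw [Matrix.det_mul]
          exact ((orth_isUnit_det _ (hQcorth t (by omega))).2).mul hAunit
        rw [hMR, Matrix.det_mul] at hMdet
        exact isUnit_of_mul_isUnit_left hMdet
      refine ⟨fun s => if s = t + 1 then q' else Qc s, fun s => if s = t then R else Rc s,
        U * R, ?_, ?_, ?_, ?_, ?_, ?_⟩
      · simp only [if_neg (by omega : (0:ℕ) ≠ t + 1)]; exact hQc0
      · intro s hs
        by_cases h : s = t + 1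
        · simp only [if_pos h]; exact hq'orth
        · simp only [if_neg h]; exact hQcorth s (by omega)
      · intro s hs
        by_cases h : s = t
        · subst h
          simp only [if_neg (by omega : s ≠ s + 1), if_pos rfl, if_pos rfl]
          exact ⟨hMR, hRut, hRdet⟩
        · have hs' : s < t := by omega
          simp only [if_neg (by omega : s ≠ t + 1), if_neg (by omega : s + 1 ≠ t + 1), if_neg h]
          exact hchain s hs'
      · exact ut_mul_ut U R hUut hRut
      · rw [Matrix.det_mul]; exact hUdet.mul hRdet
      · simp only [if_pos rfl]
        show Q₀ᵀ * (g t * Af (r - 1 - t)) = U * R * q'ᵀ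
        rw [← Matrix.mul_assoc, hprod, Matrix.mul_assoc, hMR, ← Matrix.mul_assoc]
  obtain ⟨Qc, Rc, U, hQc0, hQcorth, hchain, hUut, hUdet, hprod⟩ := chain (r - 1) le_rfl
  set Q : Fin r → Matrix (Fin n) (Fin n) ℝ :=
    fun i => if (i : ℕ) = 0 then Q₀ else Qc (r - (i : ℕ)) with hQdef
  have hQorth : ∀ i, (Q i)ᵀ * Q i = 1 := by
    intro i
    by_cases h : (i : ℕ) = 0
    · simp only [hQdef, if_pos h]; exact hQ₀orth
    · simp only [hQdef, if_neg h]
      exact hQcorth (r - (i : ℕ)) (by omega)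
  -- identification of the cyclically-next Q
  have hQnext : ∀ i : Fin r, (i : ℕ) ≠ 0 →
      Q ⟨((i : ℕ) + 1) % r, Nat.mod_lt _ hr⟩ = Qc (r - 1 - (i : ℕ)) := by
    intro i hi
    have h2 := i.2
    by_cases h : (i : ℕ) = r - 1
    · have hm : ((i : ℕ) + 1) % r = 0 := by
        rw [h, Nat.sub_add_cancel hr, Nat.mod_self]
      have hz : r - 1 - (i : ℕ) = 0 := by omega
      simp only [hQdef, hm, hz, if_pos rfl]
      exact hQc0.symm
    · have hlt : (i : ℕ) + 1 < r := by omega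
      have hm : ((i : ℕ) + 1) % r = (i : ℕ) + 1 := Nat.mod_eq_of_lt hlt
      have hz : r - ((i : ℕ) + 1) = r - 1 - (i : ℕ) := by omega
      simp only [hQdef, hm, if_neg (by omega : (i : ℕ) + 1 ≠ 0), hz]
  refine ⟨Q, hQorth, ?_, ?_⟩
  · -- quasi-triangularity of the first reduced matrix
    have h1r : (1 : ℕ) % r = 1 := Nat.mod_eq_of_lt hr2
    have hQ1 : Q ⟨1 % r, Nat.mod_lt _ hr⟩ = Qc (r - 1) := by
      simp only [hQdef]
      rw [h1r]
      simp
    have hQ0 : Q ⟨0, hr⟩ = Q₀ := by simp only [hQdef, if_pos rfl]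
    have hA0 : Af 0 = A ⟨0, hr⟩ := hAfA ⟨0, hr⟩
    rw [hQ1, hQ0, ← hA0]
    apply quasi_of_ut_mul U _ _ hUut hUdet hS
    rw [← Matrix.mul_assoc, hprod]
    simp only [Matrix.mul_assoc]
  · -- triangularity of the other reduced matrices
    intro i hi p q hpq
    have hi0 : (i : ℕ) ≠ 0 := fun h => hi (Fin.ext h)
    have h2 := i.2
    set s := r - 1 - (i : ℕ) with hs
    have hsl : s < r - 1 := by omega
    obtain ⟨hrec, hRut, _⟩ := hchain s hsl
    have hidx : r - 1 - s = (i : ℕ) := by omega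
    rw [hidx] at hrec
    have hQi : Q i = Qc (s + 1) := by
      have h3 : r - (i : ℕ) = s + 1 := by omega
      simp only [hQdef, if_neg hi0, h3]
    have hBi : (Q ⟨((i : ℕ) + 1) % r, Nat.mod_lt _ hr⟩)ᵀ * A i * Q i = Rc s := by
      rw [hQnext i hi0, hQi, ← hAfA i, ← hs, Matrix.mul_assoc]
      calc (Qc s)ᵀ * (Af (i : ℕ) * Qc (s + 1))
          = ((Qc s)ᵀ * Af (i : ℕ)) * Qc (s + 1) := by rw [Matrix.mul_assoc]
        _ = Rc s * (Qc (s+1))ᵀ * Qc (s+1) := by rw [hrec]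
        _ = Rc s := by
            rw [Matrix.mul_assoc, hQcorth (s+1) (by omega), Matrix.mul_one]
    rw [hBi]
    exact hRut p q hpq

lemma det_add_smul_one_eval {n : ℕ} (A : Matrix (Fin n) (Fin n) ℝ) (x : ℝ) :
    (A + x • 1).det = ((-A).charpoly).eval x := by
  rw [Matrix.charpoly, _root_.eval_det, matPolyEquiv_charmatrix]
  simp only [eval_sub, eval_X, eval_C, sub_neg_eq_add]
  congr 1
  simp [Matrix.scalar_apply, Matrix.smul_one_eq_diagonal, add_comm]

lemma exists_perturbation {r n : ℕ} (A : Fin r → Matrix (Fin n) (Fin n) ℝ) :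
    ∀ k : ℕ, ∃ x : ℝ, 0 < x ∧ x < 1 / (k + 1 : ℝ) ∧
      ∀ i : Fin r, IsUnit ((A i + x • 1).det) := by
  intro k
  classical
  have hfin : (⋃ i : Fin r, {x : ℝ | ((- (A i)).charpoly).IsRoot x}).Finite := by
    apply Set.finite_iUnion
    intro i
    exact Polynomial.finite_setOf_isRoot (Matrix.charpoly_monic _).ne_zero
  have hpos : (0 : ℝ) < 1 / (k + 1 : ℝ) := by positivity
  obtain ⟨x, hx, hnx⟩ := (Set.Ioo_infinite hpos).exists_notMem_finite hfin
  refine ⟨x, hx.1, hx.2, ?_⟩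
  intro i
  rw [det_add_smul_one_eval]
  rw [isUnit_iff_ne_zero]
  intro h0
  exact hnx (Set.mem_iUnion.mpr ⟨i, h0⟩)

/-- Real periodic Schur decomposition: for matrices `A 0, …, A (r-1)` associated with a cycle
there are orthogonal matrices `Q 0, …, Q (r-1)` (indices taken cyclically) such that the first
reduced matrix is quasi-upper-triangular and the remaining ones are upper triangular. -/
theorem real_periodic_schur_decomposition (n r : ℕ) (hr : 1 ≤ r)
    (A : Fin r → Matrix (Fin n) (Fin n) ℝ) :
    ∃ Q : Fin r → Matrix (Fin n) (Fin n) ℝ,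
      (∀ i, (Q i)ᵀ * Q i = 1) ∧
      QuasiUpperTriangular
        ((Q ⟨1 % r, Nat.mod_lt _ hr⟩)ᵀ * A ⟨0, hr⟩ * Q ⟨0, hr⟩) ∧
      ∀ i : Fin r, i ≠ ⟨0, hr⟩ → ∀ p q : Fin n, q < p →
        ((Q ⟨((i : ℕ) + 1) % r, Nat.mod_lt _ hr⟩)ᵀ * A i * Q i) p q = 0 := by
  classical
  choose ε hε1 hε2 hε3 using exists_perturbation A
  choose Qs hQsorth hQsquasi hQstri using
    fun k => periodic_schur_invertible n r hr (fun i => A i + ε k • 1)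
      (fun i _ => hε3 k i)
  -- the set of orthogonal matrices is compact
  set O : Set (Matrix (Fin n) (Fin n) ℝ) := {q | qᵀ * q = 1} with hO
  have hOcompact : IsCompact O := by
    have hC : IsCompact ((Set.univ.pi fun _ : Fin n => Set.univ.pi fun _ : Fin n =>
        Set.Icc (-1 : ℝ) 1) : Set (Matrix (Fin n) (Fin n) ℝ)) :=
      isCompact_univ_pi fun _ => isCompact_univ_pi fun _ => isCompact_Icc
    apply hC.of_isClosed_subset
    · have : Continuous (fun q : Matrix (Fin n) (Fin n) ℝ => qᵀ * q) :=
        (continuous_id.matrix_transpose).matrix_mul continuous_id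
      exact (isClosed_singleton (x := (1 : Matrix (Fin n) (Fin n) ℝ))).preimage this
    · intro q hq
      intro p _
      intro k _
      have hsum : ∑ l, q l k * q l k = 1 := by
        have := congrFun (congrFun hq k) k
        have h' : ∑ l, q l k * q l k = (1 : Matrix (Fin n) (Fin n) ℝ) k k := this
        simpa using h'
      have hle : q p k * q p k ≤ 1 := by
        rw [← hsum]
        exact Finset.single_le_sum (fun l _ => mul_self_nonneg (q l k)) (Finset.mem_univ p)
      constructor
      · nlinarith
      · nlinarith
  have hK : IsCompact (Set.univ.pi fun _ : Fin r => O) := isCompact_univ_pi fun _ => hOcompact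
  have hmem : ∀ k, Qs k ∈ Set.univ.pi fun _ : Fin r => O := by
    intro k i _
    exact hQsorth k i
  haveI : FirstCountableTopology (Matrix (Fin n) (Fin n) ℝ) :=
    inferInstanceAs (FirstCountableTopology (Fin n → Fin n → ℝ))
  obtain ⟨Q, hQmem, φ, hφmono, hconv⟩ := hK.tendsto_subseq hmem
  have hQorthlim : ∀ i, (Q i)ᵀ * Q i = 1 := fun i => hQmem i (Set.mem_univ i)
  -- convergence of the perturbation parameter
  have hεconv : Tendsto (fun j => ε (φ j)) atTop (𝓝 0) := by
    apply tendsto_of_tendsto_of_tendsto_of_le_of_le (g := fun _ => (0:ℝ))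
      (h := fun j : ℕ => 1 / (j + 1 : ℝ)) tendsto_const_nhds
      tendsto_one_div_add_atTop_nhds_zero_nat
    · exact fun j => (hε1 (φ j)).le
    · intro j
      refine le_trans (hε2 (φ j)).le ?_
      apply one_div_le_one_div_of_le
      · positivity
      · have h := (hφmono.le_apply : j ≤ φ j)
        have : (j : ℝ) ≤ (φ j : ℝ) := Nat.cast_le.mpr h
        linarith
  -- entrywise convergence of the reduced matrices
  have hGen : ∀ (i₁ i₂ i₃ : Fin r) (p q : Fin n),
      Tendsto (fun j => ((Qs (φ j) i₁)ᵀ * (A i₂ + ε (φ j) • 1) * Qs (φ j) i₃) p q)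
        atTop (𝓝 (((Q i₁)ᵀ * A i₂ * Q i₃) p q)) := by
    intro i₁ i₂ i₃ p q
    have hcont : Continuous (fun z : (Fin r → Matrix (Fin n) (Fin n) ℝ) × ℝ =>
        ((z.1 i₁)ᵀ * (A i₂ + z.2 • (1 : Matrix (Fin n) (Fin n) ℝ)) * z.1 i₃) p q) := by
      apply Continuous.matrix_elem
      apply Continuous.matrix_mul
      · apply Continuous.matrix_mul
        · exact Continuous.matrix_transpose ((continuous_apply i₁).comp continuous_fst)
        · exact continuous_const.add (continuous_snd.smul continuous_const)
      · exact (continuous_apply i₃).comp continuous_fst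
    have hz : Tendsto (fun j => (Qs (φ j), ε (φ j))) atTop (𝓝 (Q, (0:ℝ))) :=
      hconv.prodMk_nhds hεconv
    have hres := (hcont.tendsto (Q, (0:ℝ))).comp hz
    simpa [Function.comp_def] using hres
  refine ⟨Q, hQorthlim, ⟨?_, ?_⟩, ?_⟩
  · -- strict lower part of B₀ vanishes
    intro p q hpq
    have h0 : (fun j => ((Qs (φ j) ⟨1 % r, Nat.mod_lt _ hr⟩)ᵀ *
        (A ⟨0, hr⟩ + ε (φ j) • 1) * Qs (φ j) ⟨0, hr⟩) p q) = fun _ => (0:ℝ) :=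
      funext fun j => (hQsquasi (φ j)).1 p q hpq
    have hlim := hGen ⟨1 % r, Nat.mod_lt _ hr⟩ ⟨0, hr⟩ ⟨0, hr⟩ p q
    rw [h0] at hlim
    exact tendsto_nhds_unique hlim tendsto_const_nhds
  · -- no two consecutive nonzero subdiagonal entries
    rintro ⟨i, h1, h2, hne1, hne2⟩
    have h0 : (fun j => ((Qs (φ j) ⟨1 % r, Nat.mod_lt _ hr⟩)ᵀ *
          (A ⟨0, hr⟩ + ε (φ j) • 1) * Qs (φ j) ⟨0, hr⟩) ⟨i+1, h1⟩ ⟨i, Nat.lt_of_succ_lt h1⟩ *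
        ((Qs (φ j) ⟨1 % r, Nat.mod_lt _ hr⟩)ᵀ *
          (A ⟨0, hr⟩ + ε (φ j) • 1) * Qs (φ j) ⟨0, hr⟩) ⟨i+2, h2⟩ ⟨i+1, h1⟩)
        = fun _ => (0:ℝ) := by
      funext j
      by_contra hc
      exact (hQsquasi (φ j)).2 ⟨i, h1, h2, left_ne_zero_of_mul hc, right_ne_zero_of_mul hc⟩
    have hlim := (hGen ⟨1 % r, Nat.mod_lt _ hr⟩ ⟨0, hr⟩ ⟨0, hr⟩ ⟨i+1, h1⟩
        ⟨i, Nat.lt_of_succ_lt h1⟩).mul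
      (hGen ⟨1 % r, Nat.mod_lt _ hr⟩ ⟨0, hr⟩ ⟨0, hr⟩ ⟨i+2, h2⟩ ⟨i+1, h1⟩)
    rw [h0] at hlim
    exact (mul_ne_zero hne1 hne2) (tendsto_nhds_unique hlim tendsto_const_nhds)
  · -- triangularity of the other reduced matrices
    intro i hi p q hpq
    have h0 : (fun j => ((Qs (φ j) ⟨((i : ℕ) + 1) % r, Nat.mod_lt _ hr⟩)ᵀ *
        (A i + ε (φ j) • 1) * Qs (φ j) i) p q) = fun _ => (0:ℝ) :=
      funext fun j => hQstri (φ j) i hi p q hpq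
    have hlim := hGen ⟨((i : ℕ) + 1) % r, Nat.mod_lt _ hr⟩ i i p q
    rw [h0] at hlim
    exact tendsto_nhds_unique hlim tendsto_const_nhds
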